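/- The pair (x, y) satisfies the GO condition if and only if for every K₀ ∈ 𝔨, P₁ ∈ 𝔭₁ and P₂ ∈ 𝔭₂ there exists Z ∈ 𝔨 such that (1) ⁅Z, K₀⁆ = 0, (2) ⁅f₁(Z), P₁⁆ = ((1 − x)/x) · ⁅f₁(K₀), P₁⁆ in 𝔤₁, and (3) ⁅f₂(Z), P₂⁆ = (c₂(y − 1)/(c₁ y)) · ⁅f₂(K₀), P₂⁆ in 𝔤₂. -/

import Mathlib

private lemma expand1' {k g1 : Type*} [LieRing k] [LieAlgebra ℝ k] [LieRing g1] [LieAlgebra ℝ g1]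
    (f1 : k →ₗ⁅ℝ⁆ g1) (Z K0 : k) (P1 : g1) (x : ℝ) :
    ⁅f1 Z + (f1 K0 + P1), f1 K0 + x • P1⁆
      = f1 ⁅Z, K0⁆ + (x • ⁅f1 Z, P1⁆ + (x - 1) • ⁅f1 K0, P1⁆) := by
  simp only [lie_add, add_lie, lie_smul, smul_lie, lie_self, LieHom.map_lie, smul_zero,
    ← lie_skew P1 (f1 K0)]
  module

private lemma expand2' {k g2 : Type*} [LieRing k] [LieAlgebra ℝ k] [LieRing g2] [LieAlgebra ℝ g2]
    (f2 : k →ₗ⁅ℝ⁆ g2) (Z K0 : k) (P2 : g2) (a y : ℝ) :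
    ⁅f2 Z + (-a • f2 K0 + P2), -a • f2 K0 + y • P2⁆
      = (-a) • f2 ⁅Z, K0⁆ + (y • ⁅f2 Z, P2⁆ + (a * (1 - y)) • ⁅f2 K0, P2⁆) := by
  simp only [lie_add, add_lie, lie_smul, smul_lie, lie_self, LieHom.map_lie, smul_zero,
    ← lie_skew P2 (f2 K0)]
  module



/-- With `𝔤 = 𝔤₁ ⊕ 𝔤₂`, `𝔥 = Δf(𝔨)`, `𝔪 = 𝔪₀ ⊕ 𝔪₁ ⊕ 𝔪₂` and the metric
endomorphism `A = id ⊕ x·id ⊕ y·id`, the pair `(x, y)` satisfies the GO condition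
(for every `X ∈ 𝔪` there is `Z̄ ∈ 𝔥` with `⁅Z̄ + X, A X⁆ ∈ 𝔥`) iff for every
`K₀ ∈ 𝔨`, `P₁ ∈ 𝔭₁`, `P₂ ∈ 𝔭₂` there is `Z ∈ 𝔨` with `⁅Z, K₀⁆ = 0`,
`⁅f₁ Z, P₁⁆ = ((1 − x)/x)•⁅f₁ K₀, P₁⁆` and `⁅f₂ Z, P₂⁆ = (c₂(y − 1)/(c₁ y))•⁅f₂ K₀, P₂⁆`.
(Elements of `𝔪` are written via the parametrization
`X = (f₁ K₀ + P₁, −(c₂/c₁)·f₂ K₀ + P₂)`, and membership of a pair `(a, b)` in `𝔥` means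
`∃ W, a = f₁ W ∧ b = f₂ W`; brackets in `𝔤₁ ⊕ 𝔤₂` are taken componentwise.) -/
theorem statement2
    {k g1 g2 : Type*}
    [LieRing k] [LieAlgebra ℝ k] [Module.Finite ℝ k] [LieAlgebra.IsSemisimple ℝ k]
    [LieRing g1] [LieAlgebra ℝ g1] [Module.Finite ℝ g1] [LieAlgebra.IsSemisimple ℝ g1]
    [LieRing g2] [LieAlgebra ℝ g2] [Module.Finite ℝ g2] [LieAlgebra.IsSemisimple ℝ g2]
    (f1 : k →ₗ⁅ℝ⁆ g1) (f2 : k →ₗ⁅ℝ⁆ g2)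
    (hf1 : Function.Injective f1) (hf2 : Function.Injective f2)
    (c1 c2 : ℝ) (hc1 : 0 < c1) (hc2 : 0 < c2)
    (hB1 : ∀ Z W : k, killingForm ℝ k Z W = c1 * killingForm ℝ g1 (f1 Z) (f1 W))
    (hB2 : ∀ Z W : k, killingForm ℝ k Z W = c2 * killingForm ℝ g2 (f2 Z) (f2 W))
    (p1 : Submodule ℝ g1) (hp1 : ∀ P : g1, P ∈ p1 ↔ ∀ Z : k, killingForm ℝ g1 P (f1 Z) = 0)
    (p2 : Submodule ℝ g2) (hp2 : ∀ P : g2, P ∈ p2 ↔ ∀ Z : k, killingForm ℝ g2 P (f2 Z) = 0)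
    (hsum1 : ∀ a : g1, ∃ Z : k, a - f1 Z ∈ p1)
    (hsum2 : ∀ a : g2, ∃ Z : k, a - f2 Z ∈ p2)
    (hint1 : ∀ Z : k, f1 Z ∈ p1 → Z = 0)
    (hint2 : ∀ Z : k, f2 Z ∈ p2 → Z = 0)
    (hlie1 : ∀ Z : k, ∀ P ∈ p1, ⁅f1 Z, P⁆ ∈ p1)
    (hlie2 : ∀ Z : k, ∀ P ∈ p2, ⁅f2 Z, P⁆ ∈ p2)
    (x y : ℝ) (hx : 0 < x) (hy : 0 < y) :
    (∀ (K0 : k), ∀ P1 ∈ p1, ∀ P2 ∈ p2, ∃ Z W : k,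
        ⁅f1 Z + (f1 K0 + P1), f1 K0 + x • P1⁆ = f1 W ∧
        ⁅f2 Z + (-(c2 / c1) • f2 K0 + P2), -(c2 / c1) • f2 K0 + y • P2⁆ = f2 W) ↔
    (∀ (K0 : k), ∀ P1 ∈ p1, ∀ P2 ∈ p2, ∃ Z : k,
        ⁅Z, K0⁆ = 0 ∧
        ⁅f1 Z, P1⁆ = ((1 - x) / x) • ⁅f1 K0, P1⁆ ∧
        ⁅f2 Z, P2⁆ = (c2 * (y - 1) / (c1 * y)) • ⁅f2 K0, P2⁆) := by
  have hx' : x ≠ 0 := hx.ne'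
  have hy' : y ≠ 0 := hy.ne'
  have hc1' : c1 ≠ 0 := hc1.ne'
  set a : ℝ := c2 / c1 with ha
  have ha0 : 0 < a := div_pos hc2 hc1
  constructor
  · intro H K0 P1 hP1 P2 hP2
    obtain ⟨Z, W, h1, h2⟩ := H K0 P1 hP1 P2 hP2
    rw [expand1' f1 Z K0 P1 x] at h1
    rw [expand2' f2 Z K0 P2 a y] at h2
    -- extract from component 1
    have hQ1mem : x • ⁅f1 Z, P1⁆ + (x - 1) • ⁅f1 K0, P1⁆ ∈ p1 :=
      p1.add_mem (p1.smul_mem _ (hlie1 Z P1 hP1)) (p1.smul_mem _ (hlie1 K0 P1 hP1))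
    have hW1 : W - ⁅Z, K0⁆ = 0 := by
      apply hint1
      have : f1 (W - ⁅Z, K0⁆) = x • ⁅f1 Z, P1⁆ + (x - 1) • ⁅f1 K0, P1⁆ := by
        rw [map_sub f1, ← h1]; abel
      rw [this]; exact hQ1mem
    have hW1' : W = ⁅Z, K0⁆ := by rwa [sub_eq_zero] at hW1
    have hQ1 : x • ⁅f1 Z, P1⁆ + (x - 1) • ⁅f1 K0, P1⁆ = 0 := by
      have : f1 (W - ⁅Z, K0⁆) = x • ⁅f1 Z, P1⁆ + (x - 1) • ⁅f1 K0, P1⁆ := by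
        rw [map_sub f1, ← h1]; abel
      rw [← this, hW1, map_zero f1]
    -- extract from component 2
    have hW2 : W + a • ⁅Z, K0⁆ = 0 := by
      apply hint2
      have : f2 (W + a • ⁅Z, K0⁆) = y • ⁅f2 Z, P2⁆ + (a * (1 - y)) • ⁅f2 K0, P2⁆ := by
        rw [map_add f2, map_smul f2, ← h2]; module
      rw [this]
      exact p2.add_mem (p2.smul_mem _ (hlie2 Z P2 hP2)) (p2.smul_mem _ (hlie2 K0 P2 hP2))
    have hQ2 : y • ⁅f2 Z, P2⁆ + (a * (1 - y)) • ⁅f2 K0, P2⁆ = 0 := by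
      have : f2 (W + a • ⁅Z, K0⁆) = y • ⁅f2 Z, P2⁆ + (a * (1 - y)) • ⁅f2 K0, P2⁆ := by
        rw [map_add f2, map_smul f2, ← h2]; module
      rw [← this, hW2, map_zero f2]
    have hZK : ⁅Z, K0⁆ = 0 := by
      have h3 : (1 + a) • ⁅Z, K0⁆ = 0 := by
        rw [← hW2, hW1']; module
      have := smul_eq_zero.mp h3
      rcases this with h | h
      · exact absurd h (by positivity)
      · exact h
    refine ⟨Z, hZK, ?_, ?_⟩
    · have h4 : x • ⁅f1 Z, P1⁆ = (1 - x) • ⁅f1 K0, P1⁆ := by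
        rw [← sub_eq_zero]; rw [← hQ1]; module
      have h5 := congrArg (fun v => x⁻¹ • v) h4
      simp only [smul_smul, inv_mul_cancel₀ hx', one_smul] at h5
      have hs : (1 - x) / x = x⁻¹ * (1 - x) := by rw [div_eq_inv_mul]
      rw [hs]; exact h5
    · have h4 : y • ⁅f2 Z, P2⁆ = (a * (y - 1)) • ⁅f2 K0, P2⁆ := by
        rw [← sub_eq_zero]; rw [← hQ2]; module
      have h5 := congrArg (fun v => y⁻¹ • v) h4
      simp only [smul_smul, inv_mul_cancel₀ hy', one_smul] at h5
      have hs : c2 * (y - 1) / (c1 * y) = y⁻¹ * (a * (y - 1)) := by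
        rw [ha]; ring
      rw [hs]; exact h5
  · intro H K0 P1 hP1 P2 hP2
    obtain ⟨Z, hZK, hZ1, hZ2⟩ := H K0 P1 hP1 P2 hP2
    refine ⟨Z, 0, ?_, ?_⟩
    · rw [expand1' f1 Z K0 P1 x, hZK, map_zero f1, hZ1, smul_smul]
      have : x * ((1 - x) / x) = 1 - x := by field_simp
      rw [this]
      module
    · rw [expand2' f2 Z K0 P2 a y, hZK, map_zero f2, hZ2, smul_smul]
      have : y * (c2 * (y - 1) / (c1 * y)) = -(a * (1 - y)) := by
        rw [ha]; field_simp; ring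
      rw [this]
      module
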